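/- With uniform weights W(x) = W(¬x) = 1 for all variables, the joint probability P(D) of a smooth, deterministic, decomposable PROB D over n variables representing formula F equals |{τ : τ ⊨ F}| / 2^n, i.e., the model count of F divided by 2^n. -/

import Mathlib

/-- A PROB (probabilistic OBDD[∧]): true/false leaves, decision nodes on a
variable with lo/hi children, and conjunction nodes with a list of children. -/
inductive PROB (V : Type) : Type where
  | tru : PROB V
  | fls : PROB V
  | dec (x : V) (lo hi : PROB V) : PROB V
  | conj (children : List (PROB V)) : PROB V

namespace PROB

variable {V : Type}

/-- The set of variables mentioned in the sub-PROB rooted at a node. -/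
def vars [DecidableEq V] : PROB V → Finset V
  | .tru => ∅
  | .fls => ∅
  | .dec x lo hi => insert x (lo.vars ∪ hi.vars)
  | .conj cs => (cs.attach.map (fun c => c.1.vars)).foldr (· ∪ ·) ∅
decreasing_by
  all_goals simp_wf
  all_goals try omega
  all_goals (have h := List.sizeOf_lt_of_mem c.2; omega)

/-- Whether an assignment τ satisfies the PROB: the traversal following τ at
decision nodes and visiting all children of conjunction nodes never reaches
the false node. -/
def satb : PROB V → (V → Bool) → Bool
  | .tru, _ => true
  | .fls, _ => false
  | .dec x lo hi, τ => if τ x then hi.satb τ else lo.satb τ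
  | .conj cs, τ => cs.attach.all (fun c => c.1.satb τ)
decreasing_by
  all_goals simp_wf
  all_goals try omega
  all_goals (have h := List.sizeOf_lt_of_mem c.2; omega)

/-- Bottom-up joint probability annotation induced by a literal weight
function `W` (with `W x true` the weight of literal `x` and `W x false` the
weight of `¬x`): false ↦ 0, true ↦ 1, decision node ↦ θ_lo·P(lo) + θ_hi·P(hi)
with normalized branch parameters, conjunction ↦ product of children. -/
noncomputable def jointP (W : V → Bool → ℝ) : PROB V → ℝ
  | .tru => 1
  | .fls => 0
  | .dec x lo hi =>
      (W x false / (W x true + W x false)) * jointP W lo +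
      (W x true / (W x true + W x false)) * jointP W hi
  | .conj cs => (cs.attach.map (fun c => jointP W c.1)).prod
decreasing_by
  all_goals simp_wf
  all_goals try omega
  all_goals (have h := List.sizeOf_lt_of_mem c.2; omega)

/-- Structural invariants of a PROB: determinism is inherent in the decision
semantics; decomposability: conjunction children have pairwise disjoint
variable sets; smoothness: both children of a decision node mention the same
variables; and the decision variable does not occur below the decision node. -/
inductive Wf [DecidableEq V] : PROB V → Prop
  | tru : Wf .tru
  | fls : Wf .fls
  | dec {x : V} {lo hi : PROB V} (hxlo : x ∉ lo.vars) (hxhi : x ∉ hi.vars)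
      (hsmooth : lo.vars = hi.vars) (hlo : Wf lo) (hhi : Wf hi) :
      Wf (.dec x lo hi)
  | conj {cs : List (PROB V)} (h : ∀ c ∈ cs, Wf c)
      (hdecomp : cs.Pairwise (fun a b => Disjoint a.vars b.vars)) :
      Wf (.conj cs)



theorem all_congr' {α : Type*} {l : List α} {p q : α → Bool}
    (h : ∀ a ∈ l, p a = q a) : l.all p = l.all q := by
  induction l with
  | nil => rfl
  | cons a l ih =>
    simp only [List.all_cons, h a List.mem_cons_self,
      ih (fun b hb => h b (List.mem_cons_of_mem a hb))]

theorem satb_conj (cs : List (PROB V)) (τ : V → Bool) :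
    (PROB.conj cs).satb τ = cs.all (fun c => c.satb τ) := by
  rw [satb, Bool.eq_iff_iff]
  simp only [List.all_eq_true, List.mem_attach, true_implies, Subtype.forall]

theorem jointP_conj (W : V → Bool → ℝ) (cs : List (PROB V)) :
    (PROB.conj cs).jointP W = (cs.map (jointP W)).prod := by
  rw [jointP, List.attach_map_val]

theorem vars_conj [DecidableEq V] (cs : List (PROB V)) :
    (PROB.conj cs).vars = (cs.map vars).foldr (· ∪ ·) ∅ := by
  rw [vars, List.attach_map_val]

theorem mem_vars_conj [DecidableEq V] {x : V} {cs : List (PROB V)} :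
    x ∈ (PROB.conj cs).vars ↔ ∃ c ∈ cs, x ∈ c.vars := by
  rw [vars_conj]
  induction cs with
  | nil => simp
  | cons c rest ih => simp [ih]

theorem satb_congr [DecidableEq V] : ∀ (D : PROB V) (τ σ : V → Bool),
    (∀ x ∈ D.vars, τ x = σ x) → D.satb τ = D.satb σ
  | .tru, _, _, _ => by rw [satb, satb]
  | .fls, _, _, _ => by rw [satb, satb]
  | .dec x lo hi, τ, σ, h => by
    have hx : τ x = σ x := h x (by rw [vars]; exact Finset.mem_insert_self _ _)
    have hlo : lo.satb τ = lo.satb σ := satb_congr lo τ σ (fun y hy => h y (by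
      rw [vars]; exact Finset.mem_insert_of_mem (Finset.mem_union_left _ hy)))
    have hhi : hi.satb τ = hi.satb σ := satb_congr hi τ σ (fun y hy => h y (by
      rw [vars]; exact Finset.mem_insert_of_mem (Finset.mem_union_right _ hy)))
    rw [satb, satb, hx, hlo, hhi]
  | .conj cs, τ, σ, h => by
    rw [satb_conj, satb_conj]
    refine all_congr' (fun c hc => ?_)
    exact satb_congr c τ σ (fun y hy => h y (mem_vars_conj.2 ⟨c, hc, hy⟩))
termination_by D => sizeOf D
decreasing_by
  all_goals simp_wf
  all_goals try omega
  all_goals (have h := List.sizeOf_lt_of_mem hc; omega)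

end PROB

section Counting

open Finset

variable {V : Type} [Fintype V] [DecidableEq V]

/-- merge of two assignments along a finset -/
def mix (S : Finset V) (τ σ : V → Bool) : V → Bool := fun x => if x ∈ S then τ x else σ x

theorem card_univ_fun : (Finset.univ : Finset (V → Bool)).card = 2 ^ Fintype.card V := by
  rw [Finset.card_univ, Fintype.card_fun, Fintype.card_bool]

theorem card_filter_and (S T : Finset V) (hST : Disjoint S T) (f g : (V → Bool) → Bool)
    (hf : ∀ τ σ, (∀ x ∈ S, τ x = σ x) → f τ = f σ)
    (hg : ∀ τ σ, (∀ x ∈ T, τ x = σ x) → g τ = g σ) :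
    (univ.filter (fun τ => f τ && g τ)).card * 2 ^ Fintype.card V
      = (univ.filter (fun τ => f τ)).card * (univ.filter (fun τ => g τ)).card := by
  have hmixS : ∀ τ σ : V → Bool, ∀ x ∈ S, mix S τ σ x = τ x := by
    intro τ σ x hx; simp [mix, hx]
  have hmixT : ∀ τ σ : V → Bool, ∀ x ∈ T, mix S τ σ x = σ x := by
    intro τ σ x hx
    have : x ∉ S := Finset.disjoint_right.1 hST hx
    simp [mix, this]
  rw [← card_univ_fun (V := V), ← Finset.card_product, ← Finset.card_product]
  refine Finset.card_bij' (fun p _ => (mix S p.1 p.2, mix S p.2 p.1))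
    (fun q _ => (mix S q.1 q.2, mix S q.2 q.1)) ?_ ?_ ?_ ?_
  · rintro ⟨τ, σ⟩ hp
    simp only [Finset.mem_product, Finset.mem_filter, Finset.mem_univ, true_and,
      and_true, Bool.and_eq_true] at hp ⊢
    refine ⟨?_, ?_⟩
    · rw [hf (mix S τ σ) τ (fun x hx => hmixS τ σ x hx)]; exact hp.1
    · rw [hg (mix S σ τ) τ (fun x hx => hmixT σ τ x hx)]; exact hp.2
  · rintro ⟨α, β⟩ hq
    simp only [Finset.mem_product, Finset.mem_filter, Finset.mem_univ, true_and,
      and_true, Bool.and_eq_true] at hq ⊢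
    refine ⟨?_, ?_⟩
    · rw [hf (mix S α β) α (fun x hx => hmixS α β x hx)]; exact hq.1
    · rw [hg (mix S α β) β (fun x hx => hmixT α β x hx)]; exact hq.2
  · rintro ⟨τ, σ⟩ _
    refine Prod.ext ?_ ?_ <;> funext x <;> by_cases hx : x ∈ S <;> simp [mix, hx]
  · rintro ⟨α, β⟩ _
    refine Prod.ext ?_ ?_ <;> funext x <;> by_cases hx : x ∈ S <;> simp [mix, hx]

theorem card_filter_coord (x : V) (b : Bool) :
    (univ.filter (fun τ : V → Bool => τ x = b)).card * 2 = 2 ^ Fintype.card V := by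
  have hsplit : (univ.filter (fun τ : V → Bool => τ x = b)).card
      + (univ.filter (fun τ : V → Bool => ¬ (τ x = b))).card
      = (Finset.univ : Finset (V → Bool)).card :=
    Finset.card_filter_add_card_filter_not _
  have hbij : (univ.filter (fun τ : V → Bool => τ x = b)).card
      = (univ.filter (fun τ : V → Bool => ¬ (τ x = b))).card := by
    refine Finset.card_bij' (fun τ _ => Function.update τ x (!τ x))
      (fun τ _ => Function.update τ x (!τ x)) ?_ ?_ ?_ ?_
    · intro τ hτ
      simp only [Finset.mem_filter, Finset.mem_univ, true_and] at hτ ⊢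
      simp [Function.update_self, hτ]
    · intro τ hτ
      simp only [Finset.mem_filter, Finset.mem_univ, true_and] at hτ ⊢
      simp only [Function.update_self]
      cases b <;> revert hτ <;> cases τ x <;> simp
    · intro τ _
      funext y
      by_cases hy : y = x
      · subst hy; simp
      · simp [Function.update_of_ne hy]
    · intro τ _
      funext y
      by_cases hy : y = x
      · subst hy; simp
      · simp [Function.update_of_ne hy]
  rw [card_univ_fun] at hsplit
  calc (univ.filter (fun τ : V → Bool => τ x = b)).card * 2
      = (univ.filter (fun τ : V → Bool => τ x = b)).card
        + (univ.filter (fun τ : V → Bool => ¬ (τ x = b))).card := by rw [← hbij]; ring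
    _ = 2 ^ Fintype.card V := hsplit

end Counting

open Finset in
theorem count_eq {V : Type} [Fintype V] [DecidableEq V] (D : PROB V) (hD : D.Wf) :
    ((Finset.univ.filter (fun τ : V → Bool => D.satb τ = true)).card : ℝ)
      = D.jointP (fun _ _ => 1) * 2 ^ Fintype.card V := by
  induction hD with
  | tru =>
    have hs : ∀ τ : V → Bool, PROB.tru.satb τ = true := fun τ => by rw [PROB.satb]
    rw [Finset.filter_true_of_mem (fun τ _ => hs τ), PROB.jointP, card_univ_fun]
    push_cast; ring
  | fls =>
    have hs : ∀ τ : V → Bool, ¬ (PROB.fls.satb τ = true) := fun τ => by rw [PROB.satb]; simp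
    rw [Finset.filter_false_of_mem (fun τ _ => hs τ), PROB.jointP]
    simp
  | @dec x lo hi hxlo hxhi hsmooth hlo hhi ihlo ihhi =>
    -- abbreviations
    set n := Fintype.card V with hn
    -- split the count by the value of τ x
    have hsatb : ∀ τ : V → Bool, (PROB.dec x lo hi).satb τ
        = if τ x then hi.satb τ else lo.satb τ := fun τ => by rw [PROB.satb]
    have hsplit :
        (univ.filter (fun τ : V → Bool => (PROB.dec x lo hi).satb τ = true)).card
        = (univ.filter (fun τ : V → Bool => (τ x && hi.satb τ) = true)).card
          + (univ.filter (fun τ : V → Bool => (!(τ x) && lo.satb τ) = true)).card := by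
      have h1 := Finset.card_filter_add_card_filter_not
        (s := univ.filter (fun τ : V → Bool => (PROB.dec x lo hi).satb τ = true))
        (p := fun τ => τ x = true)
      rw [Finset.filter_filter, Finset.filter_filter] at h1
      rw [← h1]
      congr 1
      · refine congrArg Finset.card (Finset.filter_congr ?_)
        intro τ _
        rw [hsatb τ]
        cases hτx : τ x <;> simp [hτx]
      · refine congrArg Finset.card (Finset.filter_congr ?_)
        intro τ _
        rw [hsatb τ]
        cases hτx : τ x <;> simp [hτx]
    -- hi branch
    have keyhi := card_filter_and {x} hi.vars (Finset.disjoint_singleton_left.2 hxhi)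
      (fun τ => τ x) (fun τ => hi.satb τ)
      (fun τ σ h => h x (Finset.mem_singleton_self x))
      (fun τ σ h => PROB.satb_congr hi τ σ h)
    have coordhi := card_filter_coord (V := V) x true
    -- lo branch
    have keylo := card_filter_and {x} lo.vars (Finset.disjoint_singleton_left.2 hxlo)
      (fun τ => !(τ x)) (fun τ => lo.satb τ)
      (fun τ σ h => by have := h x (Finset.mem_singleton_self x); simp only [this])
      (fun τ σ h => PROB.satb_congr lo τ σ h)
    have coordlo : (univ.filter (fun τ : V → Bool => (!(τ x)) = true)).card * 2 = 2 ^ n := by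
      have := card_filter_coord (V := V) x false
      rw [← this]
      congr 2
      apply Finset.filter_congr
      intro τ _
      cases τ x <;> simp
    have hcoordhi' : (univ.filter (fun τ : V → Bool => (τ x) = true)).card * 2 = 2 ^ n :=
      coordhi
    -- deduce halving in ℕ
    have h2hi : (univ.filter (fun τ : V → Bool => (τ x && hi.satb τ) = true)).card * 2
        = (univ.filter (fun τ : V → Bool => hi.satb τ = true)).card := by
      have hpos : 0 < 2 ^ n := by positivity
      have : (univ.filter (fun τ : V → Bool => (τ x && hi.satb τ) = true)).card * 2 * 2 ^ n
          = (univ.filter (fun τ : V → Bool => hi.satb τ = true)).card * 2 ^ n := by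
        calc (univ.filter (fun τ : V → Bool => (τ x && hi.satb τ) = true)).card * 2 * 2 ^ n
            = ((univ.filter (fun τ : V → Bool => (τ x && hi.satb τ) = true)).card * 2 ^ n) * 2 := by ring
          _ = ((univ.filter (fun τ : V → Bool => (τ x) = true)).card
              * (univ.filter (fun τ : V → Bool => hi.satb τ = true)).card) * 2 := by rw [keyhi]
          _ = ((univ.filter (fun τ : V → Bool => (τ x) = true)).card * 2)
              * (univ.filter (fun τ : V → Bool => hi.satb τ = true)).card := by ring
          _ = (univ.filter (fun τ : V → Bool => hi.satb τ = true)).card * 2 ^ n := by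
              rw [hcoordhi']; ring
      exact Nat.eq_of_mul_eq_mul_right hpos this
    have h2lo : (univ.filter (fun τ : V → Bool => (!(τ x) && lo.satb τ) = true)).card * 2
        = (univ.filter (fun τ : V → Bool => lo.satb τ = true)).card := by
      have hpos : 0 < 2 ^ n := by positivity
      have : (univ.filter (fun τ : V → Bool => (!(τ x) && lo.satb τ) = true)).card * 2 * 2 ^ n
          = (univ.filter (fun τ : V → Bool => lo.satb τ = true)).card * 2 ^ n := by
        calc (univ.filter (fun τ : V → Bool => (!(τ x) && lo.satb τ) = true)).card * 2 * 2 ^ n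
            = ((univ.filter (fun τ : V → Bool => (!(τ x) && lo.satb τ) = true)).card * 2 ^ n) * 2 := by ring
          _ = ((univ.filter (fun τ : V → Bool => (!(τ x)) = true)).card
              * (univ.filter (fun τ : V → Bool => lo.satb τ = true)).card) * 2 := by rw [keylo]
          _ = ((univ.filter (fun τ : V → Bool => (!(τ x)) = true)).card * 2)
              * (univ.filter (fun τ : V → Bool => lo.satb τ = true)).card := by ring
          _ = (univ.filter (fun τ : V → Bool => lo.satb τ = true)).card * 2 ^ n := by
              rw [coordlo]; ring
      exact Nat.eq_of_mul_eq_mul_right hpos this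
    -- now in ℝ
    rw [PROB.jointP, hsplit, Nat.cast_add]
    have h2hi' : ((univ.filter (fun τ : V → Bool => (τ x && hi.satb τ) = true)).card : ℝ) * 2
        = ((univ.filter (fun τ : V → Bool => hi.satb τ = true)).card : ℝ) := by
      exact_mod_cast congrArg (Nat.cast : ℕ → ℝ) h2hi
    have h2lo' : ((univ.filter (fun τ : V → Bool => (!(τ x) && lo.satb τ) = true)).card : ℝ) * 2
        = ((univ.filter (fun τ : V → Bool => lo.satb τ = true)).card : ℝ) := by
      exact_mod_cast congrArg (Nat.cast : ℕ → ℝ) h2lo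
    rw [ihlo] at h2lo'
    rw [ihhi] at h2hi'
    linarith [h2hi', h2lo']
  | @conj cs h hdecomp ih =>
    clear h
    induction cs with
    | nil =>
      have hs : ∀ τ : V → Bool, (PROB.conj ([] : List (PROB V))).satb τ = true := fun τ => by
        rw [PROB.satb_conj]; simp
      rw [Finset.filter_true_of_mem (fun τ _ => hs τ), PROB.jointP_conj, card_univ_fun]
      simp
    | cons c rest ihrest =>
      have hdisj : Disjoint c.vars (PROB.conj rest).vars := by
        rw [Finset.disjoint_right]
        intro y hy hyc
        obtain ⟨d, hd, hyd⟩ := PROB.mem_vars_conj.1 hy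
        exact Finset.disjoint_left.1 ((List.pairwise_cons.1 hdecomp).1 d hd) hyc hyd
      have key := card_filter_and c.vars (PROB.conj rest).vars hdisj
        (fun τ => c.satb τ) (fun τ => (PROB.conj rest).satb τ)
        (fun τ σ hh => PROB.satb_congr c τ σ hh)
        (fun τ σ hh => PROB.satb_congr (PROB.conj rest) τ σ hh)
      have hsatb : ∀ τ : V → Bool, (PROB.conj (c :: rest)).satb τ
          = (c.satb τ && (PROB.conj rest).satb τ) := fun τ => by
        rw [PROB.satb_conj, PROB.satb_conj, List.all_cons]
      have hfe : (univ.filter (fun τ : V → Bool => (PROB.conj (c :: rest)).satb τ = true))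
          = univ.filter (fun τ : V → Bool => (c.satb τ && (PROB.conj rest).satb τ) = true) :=
        Finset.filter_congr (fun τ _ => by rw [hsatb τ])
      have hc := ih c List.mem_cons_self
      have hrest := ihrest
        ((List.pairwise_cons.1 hdecomp).2)
        (fun d hd => ih d (List.mem_cons_of_mem c hd))
      have hPmul : (PROB.conj (c :: rest)).jointP (fun _ _ => 1)
          = c.jointP (fun _ _ => 1) * (PROB.conj rest).jointP (fun _ _ => 1) := by
        rw [PROB.jointP_conj, List.map_cons, List.prod_cons, ← PROB.jointP_conj]
      rw [hfe, hPmul]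
      have h2 : ((2 : ℝ) ^ Fintype.card V) ≠ 0 := by positivity
      apply mul_right_cancel₀ h2
      have key' : ((univ.filter (fun τ : V → Bool => (c.satb τ && (PROB.conj rest).satb τ) = true)).card : ℝ)
          * 2 ^ Fintype.card V
          = ((univ.filter (fun τ : V → Bool => c.satb τ = true)).card : ℝ)
            * ((univ.filter (fun τ : V → Bool => (PROB.conj rest).satb τ = true)).card : ℝ) := by
        exact_mod_cast congrArg (Nat.cast : ℕ → ℝ) key
      rw [key', hc, hrest]
      ring

/-- With uniform weights `W(x) = W(¬x) = 1` (so every branch parameter is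
1/2), the joint probability of a smooth, deterministic, decomposable PROB `D`
over `n` variables equals the model count of the formula it represents
divided by `2 ^ n`. -/
theorem stmt_8 {V : Type} [Fintype V] [DecidableEq V]
    (D : PROB V) (hD : D.Wf) (hvars : D.vars = Finset.univ) :
    D.jointP (fun _ _ => (1 : ℝ)) =
      ((Finset.univ.filter (fun τ : V → Bool => D.satb τ = true)).card : ℝ) /
        2 ^ (Fintype.card V) := by
  rw [count_eq D hD]
  field_simp
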